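/- arXiv:1109.3418 — 2 statements merged into one kernel-verified Lean document; each statement's English description precedes it below -/
import Mathlib

section
/- For integers k ≥ 5 with N₁ leaves blocking, if (k−1)·N₁ ≤ (k−1)(∑(d_V−2) + r) + ∑(k−d_V) + s and N₁ > (k−4)∑(d_V−1) + (k−3)r + s − 2, where each d_V ≥ 2, r ≥ 1, s ≥ 0 are integers, then ∑(k²−6k+6)(d_V−1) + (k²−5k+5)r + (k−2)s − 2(k−1) < 0. -/
theorem stmt7 {ι : Type*} [Fintype ι] (d : ι → ℤ) (hd : ∀ i, 2 ≤ d i)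
    (k N₁ r s : ℕ) (hk : 5 ≤ k) (hr : 1 ≤ r)
    (h1 : ((k : ℤ) - 1) * N₁
        ≤ ((k : ℤ) - 1) * ((∑ i, (d i - 2)) + r) + (∑ i, ((k : ℤ) - d i)) + s)
    (h2 : ((k : ℤ) - 4) * (∑ i, (d i - 1)) + ((k : ℤ) - 3) * r + s - 2 < (N₁ : ℤ)) :
    ∑ i, (((k : ℤ) ^ 2 - 6 * k + 6) * (d i - 1)) + ((k : ℤ) ^ 2 - 5 * k + 5) * r
      + ((k : ℤ) - 2) * s - 2 * ((k : ℤ) - 1) < 0 := by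
  set A : ℤ := ∑ i : ι, d i with hA
  set n : ℤ := (Fintype.card ι : ℤ) with hn
  have e1 : ∑ i : ι, (d i - 2) = A - 2 * n := by
    simp [Finset.sum_sub_distrib, hA, hn, two_mul, Finset.card_univ]; ring
  have e2 : ∑ i : ι, ((k : ℤ) - d i) = (k : ℤ) * n - A := by
    simp [Finset.sum_sub_distrib, hA, hn, Finset.card_univ, mul_comm]
  have e3 : ∑ i : ι, (d i - 1) = A - n := by
    simp [Finset.sum_sub_distrib, hA, hn, Finset.card_univ]
  have e4 : ∑ i : ι, (((k : ℤ) ^ 2 - 6 * k + 6) * (d i - 1))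
      = ((k : ℤ) ^ 2 - 6 * k + 6) * (A - n) := by
    rw [← Finset.mul_sum, e3]
  have hAn : 2 * n ≤ A := by
    have h := Finset.sum_le_sum (fun i (_ : i ∈ Finset.univ) => hd i)
    simpa [Finset.sum_const, Finset.card_univ, hA, hn, mul_comm] using h
  have hkZ : (5 : ℤ) ≤ (k : ℤ) := by exact_mod_cast hk
  have hrZ : (1 : ℤ) ≤ (r : ℤ) := by exact_mod_cast hr
  have hsZ : (0 : ℤ) ≤ (s : ℤ) := by exact_mod_cast Nat.zero_le s
  rw [e1, e2] at h1
  rw [e3] at h2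
  rw [e4]
  nlinarith [mul_le_mul_of_nonneg_left (Int.add_one_le_iff.mpr h2)
      (by linarith : (0:ℤ) ≤ (k : ℤ) - 1), sq_nonneg ((k:ℤ) - 3),
    mul_nonneg (by nlinarith : (0:ℤ) ≤ (k:ℤ)^2 - 6*k + 6) (by linarith : (0:ℤ) ≤ A - n)]
end

section
/- Lovász Local Lemma (symmetric form): Let E₁,...,E_n be events in a probability space with Pr(E_i) ≤ p for all i. If each event is mutually independent of all other events except at most d of them, and e·p·(d+1) ≤ 1 (where e is Euler's number), then Pr(⋂_{i=1}^n E_i^c) > 0. -/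
open MeasureTheory ProbabilityTheory
open scoped ENNReal

private lemma lll_indep_step {Ω : Type*} [MeasurableSpace Ω] (μ : Measure Ω)
    (n : ℕ) (E : Fin n → Set Ω) (i : Fin n) (Γ : Fin n → Finset (Fin n))
    (hindep : Indep (MeasurableSpace.generateFrom {E i})
        (MeasurableSpace.generateFrom {s | ∃ j, j ≠ i ∧ j ∉ Γ i ∧ s = E j}) μ)
    (S : Finset (Fin n)) (hS : ∀ j ∈ S, j ≠ i ∧ j ∉ Γ i) :
    μ (E i ∩ ⋂ j ∈ S, (E j)ᶜ) = μ (E i) * μ (⋂ j ∈ S, (E j)ᶜ) := by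
  refine (Indep_iff _ _ μ).1 hindep _ _ ?_ ?_
  · exact MeasurableSpace.measurableSet_generateFrom rfl
  · refine MeasurableSet.biInter S.countable_toSet fun j hj => ?_
    refine MeasurableSet.compl ?_
    exact MeasurableSpace.measurableSet_generateFrom ⟨j, (hS j hj).1, (hS j hj).2, rfl⟩

private lemma lll_peel {Ω : Type*} [MeasurableSpace Ω] (μ : Measure Ω)
    [IsProbabilityMeasure μ] (A W : Set Ω) (hA : MeasurableSet A) (hW : MeasurableSet W)
    (x : ℝ≥0∞) (hx1 : x ≤ 1) (h : μ (A ∩ W) ≤ x * μ W) :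
    (1 - x) * μ W ≤ μ (Aᶜ ∩ W) := by
  have h1 : Aᶜ ∩ W = W \ (W ∩ A) := by
    rw [Set.diff_self_inter, Set.diff_eq, Set.inter_comm]
  rw [h1, measure_diff Set.inter_subset_left (hW.inter hA).nullMeasurableSet
    (measure_ne_top μ _)]
  refine ENNReal.le_sub_of_add_le_right (measure_ne_top μ _) ?_
  calc (1 - x) * μ W + μ (W ∩ A) ≤ (1 - x) * μ W + x * μ W := by
        rw [Set.inter_comm]; exact add_le_add le_rfl h
    _ = μ W := by rw [← add_mul, tsub_add_cancel_of_le hx1, one_mul]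

private lemma lll_cond {Ω : Type*} [MeasurableSpace Ω] (μ : Measure Ω)
    [IsProbabilityMeasure μ] {n : ℕ} (E : Fin n → Set Ω)
    (hE : ∀ i, MeasurableSet (E i)) (d : ℕ) (Γ : Fin n → Finset (Fin n))
    (hΓ : ∀ i, (Γ i).card ≤ d)
    (hindep : ∀ i, Indep (MeasurableSpace.generateFrom {E i})
        (MeasurableSpace.generateFrom {s | ∃ j, j ≠ i ∧ j ∉ Γ i ∧ s = E j}) μ)
    (x : ℝ≥0∞) (hx1 : x < 1) (hpx : ∀ i, μ (E i) ≤ x * (1 - x) ^ d) :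
    ∀ (m : ℕ) (S : Finset (Fin n)), S.card ≤ m → ∀ i ∉ S,
      μ (E i ∩ ⋂ j ∈ S, (E j)ᶜ) ≤ x * μ (⋂ j ∈ S, (E j)ᶜ) := by
  intro m
  induction m with
  | zero =>
    intro S hScard i _
    rw [Finset.card_eq_zero.mp (Nat.le_zero.mp hScard)]
    simp only [Finset.notMem_empty, Set.iInter_of_empty, Set.iInter_univ, Set.inter_univ]
    calc μ (E i) ≤ x * (1 - x) ^ d := hpx i
      _ ≤ x * 1 := by
          exact mul_le_mul_right (pow_le_one' tsub_le_self d) x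
      _ = x * μ Set.univ := by rw [measure_univ]
  | succ m IH =>
    intro S hScard i hiS
    set S₁ := S ∩ Γ i with hS₁def
    set S₂ := S \ Γ i with hS₂def
    have key : ∀ T : Finset (Fin n), T ⊆ S₁ →
        (1 - x) ^ T.card * μ (⋂ j ∈ S₂, (E j)ᶜ) ≤ μ (⋂ j ∈ S₂ ∪ T, (E j)ᶜ) := by
      intro T
      induction T using Finset.induction_on with
      | empty => simp
      | @insert a T haT ih =>
        intro hsub
        have haS₁ : a ∈ S₁ := hsub (Finset.mem_insert_self a T)
        have hTsub : T ⊆ S₁ := (Finset.subset_insert a T).trans hsub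
        have haΓ : a ∈ Γ i := (Finset.mem_inter.mp haS₁).2
        have haS : a ∈ S := (Finset.mem_inter.mp haS₁).1
        have haU : a ∉ S₂ ∪ T := by
          intro h
          rcases Finset.mem_union.mp h with h | h
          · exact (Finset.mem_sdiff.mp h).2 haΓ
          · exact haT h
        have hsubS : S₂ ∪ T ⊆ S :=
          Finset.union_subset Finset.sdiff_subset (hTsub.trans Finset.inter_subset_left)
        have hss : S₂ ∪ T ⊂ S :=
          (Finset.ssubset_iff_of_subset hsubS).mpr ⟨a, haS, haU⟩
        have hcard : (S₂ ∪ T).card ≤ m :=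
          Nat.lt_succ_iff.mp (lt_of_lt_of_le (Finset.card_lt_card hss) hScard)
        have hWmeas : MeasurableSet (⋂ j ∈ S₂ ∪ T, (E j)ᶜ) :=
          Finset.measurableSet_biInter _ fun j _ => (hE j).compl
        have hIH := IH (S₂ ∪ T) hcard a haU
        have hrw : S₂ ∪ insert a T = insert a (S₂ ∪ T) := Finset.union_insert a S₂ T
        rw [hrw, Finset.set_biInter_insert, Finset.card_insert_of_notMem haT]
        calc (1 - x) ^ (T.card + 1) * μ (⋂ j ∈ S₂, (E j)ᶜ)
            = (1 - x) * ((1 - x) ^ T.card * μ (⋂ j ∈ S₂, (E j)ᶜ)) := by ring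
          _ ≤ (1 - x) * μ (⋂ j ∈ S₂ ∪ T, (E j)ᶜ) := mul_le_mul_right (ih hTsub) _
          _ ≤ μ ((E a)ᶜ ∩ ⋂ j ∈ S₂ ∪ T, (E j)ᶜ) :=
              lll_peel μ _ _ (hE a) hWmeas x hx1.le hIH
    have hS₁card : S₁.card ≤ d :=
      le_trans (Finset.card_le_card Finset.inter_subset_right) (hΓ i)
    have hunion : S₂ ∪ S₁ = S := Finset.sdiff_union_inter S (Γ i)
    have hden : (1 - x) ^ d * μ (⋂ j ∈ S₂, (E j)ᶜ) ≤ μ (⋂ j ∈ S, (E j)ᶜ) := by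
      calc (1 - x) ^ d * μ (⋂ j ∈ S₂, (E j)ᶜ)
          ≤ (1 - x) ^ S₁.card * μ (⋂ j ∈ S₂, (E j)ᶜ) :=
            mul_le_mul_left (pow_le_pow_of_le_one bot_le tsub_le_self hS₁card) _
        _ ≤ μ (⋂ j ∈ S₂ ∪ S₁, (E j)ᶜ) := key S₁ Finset.Subset.rfl
        _ = μ (⋂ j ∈ S, (E j)ᶜ) := by rw [hunion]
    have hnum : μ (E i ∩ ⋂ j ∈ S, (E j)ᶜ) ≤ μ (E i) * μ (⋂ j ∈ S₂, (E j)ᶜ) := by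
      refine le_of_le_of_eq (measure_mono ?_) (lll_indep_step μ n E i Γ (hindep i) S₂ ?_)
      · refine Set.inter_subset_inter_right _ ?_
        intro ω hω
        simp only [Set.mem_iInter] at hω ⊢
        exact fun j hj => hω j (Finset.sdiff_subset hj)
      · intro j hj
        rw [Finset.mem_sdiff] at hj
        exact ⟨fun h => hiS (h ▸ hj.1), hj.2⟩
    calc μ (E i ∩ ⋂ j ∈ S, (E j)ᶜ) ≤ μ (E i) * μ (⋂ j ∈ S₂, (E j)ᶜ) := hnum
      _ ≤ x * (1 - x) ^ d * μ (⋂ j ∈ S₂, (E j)ᶜ) := mul_le_mul_left (hpx i) _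
      _ = x * ((1 - x) ^ d * μ (⋂ j ∈ S₂, (E j)ᶜ)) := by ring
      _ ≤ x * μ (⋂ j ∈ S, (E j)ᶜ) := mul_le_mul_right hden _

private lemma lll_prod {Ω : Type*} [MeasurableSpace Ω] (μ : Measure Ω)
    [IsProbabilityMeasure μ] {n : ℕ} (E : Fin n → Set Ω)
    (hE : ∀ i, MeasurableSet (E i)) (d : ℕ) (Γ : Fin n → Finset (Fin n))
    (hΓ : ∀ i, (Γ i).card ≤ d)
    (hindep : ∀ i, Indep (MeasurableSpace.generateFrom {E i})
        (MeasurableSpace.generateFrom {s | ∃ j, j ≠ i ∧ j ∉ Γ i ∧ s = E j}) μ)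
    (x : ℝ≥0∞) (hx1 : x < 1) (hpx : ∀ i, μ (E i) ≤ x * (1 - x) ^ d) :
    ∀ S : Finset (Fin n), (1 - x) ^ S.card ≤ μ (⋂ j ∈ S, (E j)ᶜ) := by
  intro S
  induction S using Finset.induction_on with
  | empty => simp
  | @insert a T haT ih =>
    have hWmeas : MeasurableSet (⋂ j ∈ T, (E j)ᶜ) :=
      Finset.measurableSet_biInter _ fun j _ => (hE j).compl
    have hcond := lll_cond μ E hE d Γ hΓ hindep x hx1 hpx T.card T le_rfl a haT
    rw [Finset.set_biInter_insert, Finset.card_insert_of_notMem haT]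
    calc (1 - x) ^ (T.card + 1)
        = (1 - x) * (1 - x) ^ T.card := by ring
      _ ≤ (1 - x) * μ (⋂ j ∈ T, (E j)ᶜ) := mul_le_mul_right ih _
      _ ≤ μ ((E a)ᶜ ∩ ⋂ j ∈ T, (E j)ᶜ) := lll_peel μ _ _ (hE a) hWmeas x hx1.le hcond

private lemma lll_numeric (p : ℝ) (d : ℕ) (hepd : Real.exp 1 * p * (d + 1) ≤ 1) :
    ∃ y : ℝ, 0 ≤ y ∧ y < 1 ∧ p ≤ y * (1 - y) ^ d := by
  have he : (0:ℝ) < Real.exp 1 := Real.exp_pos 1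
  have he1 : (1:ℝ) < Real.exp 1 := by
    have := Real.exp_one_gt_d9; linarith
  rcases Nat.eq_zero_or_pos d with hd | hd
  · subst hd
    refine ⟨(Real.exp 1)⁻¹, by positivity, inv_lt_one_of_one_lt₀ he1, ?_⟩
    simp only [pow_zero, mul_one]
    rw [← one_div, le_div_iff₀ he]
    norm_num at hepd
    nlinarith [hepd]
  · set D : ℝ := (d : ℝ) with hDdef
    have hD : (1:ℝ) ≤ D := by
      have h1 : 1 ≤ d := hd
      rw [hDdef]; exact_mod_cast h1
    have hD0 : (0:ℝ) < D := by linarith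
    have hD1 : (0:ℝ) < D + 1 := by linarith
    refine ⟨1/(D+1), by positivity, by rw [div_lt_one hD1]; linarith, ?_⟩
    have key : (Real.exp 1)⁻¹ ≤ (D/(D+1))^d := by
      have h1 : (D+1)/D ≤ Real.exp (1/D) := by
        have h := Real.add_one_le_exp (1/D)
        calc (D+1)/D = 1/D + 1 := by field_simp; ring
          _ ≤ Real.exp (1/D) := h
      have h2 : ((D+1)/D)^d ≤ Real.exp 1 := by
        calc ((D+1)/D)^d ≤ (Real.exp (1/D))^d := pow_le_pow_left₀ (by positivity) h1 d
          _ = Real.exp (d * (1/D)) := (Real.exp_nat_mul _ d).symm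
          _ = Real.exp 1 := by
              rw [← hDdef, mul_one_div, div_self hD0.ne']
      have h3 : (D/(D+1))^d = (((D+1)/D)^d)⁻¹ := by rw [← inv_pow, inv_div]
      rw [h3]
      exact inv_anti₀ (by positivity) h2
    have hp1 : p ≤ (Real.exp 1 * (D+1))⁻¹ := by
      rw [← one_div, le_div_iff₀ (by positivity)]
      calc p * (Real.exp 1 * (D+1)) = Real.exp 1 * p * (D+1) := by ring
        _ ≤ 1 := hepd
    calc p ≤ (Real.exp 1 * (D+1))⁻¹ := hp1
      _ = (1/(D+1)) * (Real.exp 1)⁻¹ := by rw [mul_inv]; ring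
      _ ≤ (1/(D+1)) * (D/(D+1))^d := mul_le_mul_of_nonneg_left key (by positivity)
      _ = (1/(D+1)) * (1 - 1/(D+1))^d := by
          congr 2
          field_simp
          ring

/-- Symmetric Lovász Local Lemma: if each event `E i` has probability at most `p`,
each event is independent (jointly, i.e. of the generated σ-algebra) of all other
events except at most `d` of them, and `e · p · (d + 1) ≤ 1`, then with positive
probability none of the events occurs. -/
theorem stmt17 {Ω : Type*} [MeasurableSpace Ω] (μ : Measure Ω)
    [IsProbabilityMeasure μ] (n : ℕ) (E : Fin n → Set Ω)
    (hE : ∀ i, MeasurableSet (E i)) (p : ℝ) (hp : ∀ i, (μ (E i)).toReal ≤ p)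
    (d : ℕ) (Γ : Fin n → Finset (Fin n)) (hΓ : ∀ i, (Γ i).card ≤ d)
    (hindep : ∀ i, Indep (MeasurableSpace.generateFrom {E i})
        (MeasurableSpace.generateFrom {s | ∃ j, j ≠ i ∧ j ∉ Γ i ∧ s = E j}) μ)
    (hepd : Real.exp 1 * p * (d + 1) ≤ 1) :
    0 < μ (⋂ i, (E i)ᶜ) := by
  obtain ⟨y, hy0, hy1, hpy⟩ := lll_numeric p d hepd
  set x : ℝ≥0∞ := ENNReal.ofReal y with hxdef
  have hx1 : x < 1 := by
    rw [hxdef, ← ENNReal.ofReal_one]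
    exact ENNReal.ofReal_lt_ofReal_iff one_pos |>.mpr hy1
  have hpx : ∀ i, μ (E i) ≤ x * (1 - x) ^ d := by
    intro i
    have h1 : μ (E i) ≤ ENNReal.ofReal p := by
      rw [← ENNReal.ofReal_toReal (measure_ne_top μ (E i))]
      exact ENNReal.ofReal_le_ofReal (hp i)
    refine h1.trans ?_
    have h2 : ENNReal.ofReal (y * (1 - y) ^ d) = x * (1 - x) ^ d := by
      rw [ENNReal.ofReal_mul hy0, ENNReal.ofReal_pow (by linarith),
        ENNReal.ofReal_sub 1 hy0, ENNReal.ofReal_one, hxdef]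
    rw [← h2]
    exact ENNReal.ofReal_le_ofReal hpy
  have hbar := lll_prod μ E hE d Γ hΓ hindep x hx1 hpx Finset.univ
  have hiff : (⋂ i, (E i)ᶜ) = ⋂ j ∈ Finset.univ, (E j)ᶜ := by simp
  rw [hiff]
  refine lt_of_lt_of_le ?_ hbar
  refine pos_iff_ne_zero.mpr (pow_ne_zero _ ?_)
  exact (tsub_pos_of_lt hx1).ne'
end
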